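/- In a general probabilistic relation under an injective scoring function, the Global-Topk probability of t equals the Global-Topk probability of the special tuple t_{e_t} in the induced event relation, when the induced relation is scored so that t_{e_t} has the lowest score: P^{R^p}_{k,s}(t) = P^{E^p}_{k,s^E}(t_{e_t}). -/

import Mathlib

open Finset

lemma keyFG {α : Type*} {m : ℕ} [DecidableEq α] (C : Fin m → Finset α)
    (p : α → ℝ) (high : α → Prop) [DecidablePred high]
    (hdisj : ∀ i j : Fin m, i ≠ j → Disjoint (C i) (C j))
    (I : Finset (Fin m)) (k : ℕ) :
    (∑ W ∈ (I.biUnion C).powerset.filter (fun W =>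
        (∀ i ∈ I, (W ∩ C i).card ≤ 1) ∧ (W.filter high).card < k),
      (∏ u ∈ W, p u) * ∏ i ∈ I.filter (fun i => W ∩ C i = ∅), (1 - ∑ u ∈ C i, p u))
    = ∑ S ∈ I.powerset.filter (fun S => S.card < k),
        (∏ i ∈ S, ∑ u ∈ (C i).filter high, p u) *
          ∏ i ∈ I \ S, (1 - ∑ u ∈ (C i).filter high, p u) := by
  induction I using Finset.induction_on generalizing k with
  | empty =>
      by_cases hk : 0 < k <;> simp [Finset.filter_singleton, hk]
  | @insert j I hjI ih =>
      set q : Fin m → ℝ := fun i => ∑ u ∈ (C i).filter high, p u with hq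
      set c : Fin m → ℝ := fun i => 1 - ∑ u ∈ C i, p u with hc
      have hdisjI : ∀ i ∈ I, ∀ v ∈ C j, v ∉ C i := by
        intro i hi v hv hvi
        exact Finset.disjoint_left.1 (hdisj j i (fun h => hjI (h ▸ hi))) hv hvi
      have hBj : ∀ v ∈ I.biUnion C, v ∉ C j := by
        intro v hv hvj
        obtain ⟨i, hi, hvi⟩ := mem_biUnion.1 hv
        exact hdisjI i hi v hvj hvi
      have hstep : (∑ W ∈ ((insert j I).biUnion C).powerset.filter (fun W =>
            (∀ i ∈ insert j I, (W ∩ C i).card ≤ 1) ∧ (W.filter high).card < k),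
          (∏ u ∈ W, p u) * ∏ i ∈ (insert j I).filter (fun i => W ∩ C i = ∅), c i)
          = c j * (∑ W ∈ (I.biUnion C).powerset.filter (fun W =>
              (∀ i ∈ I, (W ∩ C i).card ≤ 1) ∧ (W.filter high).card < k),
            (∏ u ∈ W, p u) * ∏ i ∈ I.filter (fun i => W ∩ C i = ∅), c i)
          + ∑ u ∈ C j, p u * (∑ W ∈ (I.biUnion C).powerset.filter (fun W =>
              (∀ i ∈ I, (W ∩ C i).card ≤ 1) ∧
                (W.filter high).card < (if high u then k - 1 else k)),
            (∏ u ∈ W, p u) * ∏ i ∈ I.filter (fun i => W ∩ C i = ∅), c i) := by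
        rw [biUnion_insert]
        have hmaps : ∀ W ∈ ((C j ∪ I.biUnion C)).powerset.filter (fun W =>
            (∀ i ∈ insert j I, (W ∩ C i).card ≤ 1) ∧ (W.filter high).card < k),
            W ∩ C j ∈ insert (∅ : Finset α) ((C j).image (fun u => {u})) := by
          intro W hW
          obtain ⟨hWp, hcard, hcnt⟩ := mem_filter.1 hW
          rcases (W ∩ C j).eq_empty_or_nonempty with h | ⟨u, hu⟩
          · simp [h]
          · have h1 : (W ∩ C j).card = 1 :=
              le_antisymm (hcard j (mem_insert_self j I)) (card_pos.2 ⟨u, hu⟩)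
            obtain ⟨v, hv⟩ := card_eq_one.1 h1
            have hvC : v ∈ C j := (mem_inter.1 (hv ▸ mem_singleton_self v)).2
            rw [hv]
            exact mem_insert_of_mem (mem_image.2 ⟨v, hvC, rfl⟩)
        rw [← Finset.sum_fiberwise_of_maps_to hmaps]
        rw [sum_insert (by simp)]
        rw [Finset.sum_image (fun x _ y _ h => singleton_inj.1 h)]
        congr 1
        · -- empty fiber
          rw [mul_sum]
          refine Finset.sum_nbij' (fun W => W) (fun W => W) ?_ ?_
            (fun a _ => rfl) (fun a _ => rfl) ?_
          · intro W hW
            simp only [mem_filter, mem_powerset] at hW ⊢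
            obtain ⟨⟨hsub, hcard, hcnt⟩, hWj⟩ := hW
            refine ⟨?_, fun i hi => hcard i (mem_insert_of_mem hi), hcnt⟩
            intro v hv
            rcases mem_union.1 (hsub hv) with h | h
            · exact absurd (mem_inter.2 ⟨hv, h⟩) (by rw [hWj]; exact notMem_empty v)
            · exact h
          · intro W hW
            simp only [mem_filter, mem_powerset] at hW ⊢
            obtain ⟨hsub, hcard, hcnt⟩ := hW
            have hWj : W ∩ C j = ∅ := by
              rw [eq_empty_iff_forall_notMem]
              intro v hv
              exact hBj v (hsub (mem_inter.1 hv).1) (mem_inter.1 hv).2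
            refine ⟨⟨fun v hv => mem_union_right _ (hsub hv), ?_, hcnt⟩, hWj⟩
            intro i hi
            rcases mem_insert.1 hi with h | h
            · rw [h, hWj]; simp
            · exact hcard i h
          · intro W hW
            simp only [mem_filter, mem_powerset] at hW
            obtain ⟨-, hWj⟩ := hW
            rw [filter_insert, if_pos hWj, prod_insert (by simp [hjI])]
            ring
        · -- singleton fibers
          refine sum_congr rfl fun u hu => ?_
          rw [mul_sum]
          have huB : u ∉ I.biUnion C := fun h => hBj u h hu
          refine Finset.sum_nbij' (fun W => W.erase u) (fun W => insert u W) ?_ ?_ ?_ ?_ ?_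
          · intro W hW
            simp only [mem_filter, mem_powerset] at hW ⊢
            obtain ⟨⟨hsub, hcard, hcnt⟩, hWj⟩ := hW
            have huW : u ∈ W := (mem_inter.1 (hWj.symm ▸ mem_singleton_self u)).1
            refine ⟨?_, ?_, ?_⟩
            · intro v hv
              obtain ⟨hvu, hvW⟩ := mem_erase.1 hv
              rcases mem_union.1 (hsub hvW) with h | h
              · exact absurd (mem_singleton.1 (hWj ▸ mem_inter.2 ⟨hvW, h⟩)) hvu
              · exact h
            · intro i hi
              exact le_trans (card_le_card (inter_subset_inter (erase_subset u W)
                (Finset.Subset.refl _))) (hcard i (mem_insert_of_mem hi))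
            · have hfil : W.filter high =
                  if high u then insert u ((W.erase u).filter high)
                  else (W.erase u).filter high := by
                conv_lhs => rw [← insert_erase huW]
                rw [filter_insert]
              by_cases hhu : high u
              · rw [if_pos hhu]
                rw [hfil, if_pos hhu, card_insert_of_notMem
                  (fun h => (notMem_erase u W) (mem_filter.1 h).1)] at hcnt
                omega
              · rw [if_neg hhu]
                rw [hfil, if_neg hhu] at hcnt
                exact hcnt
          · intro W hW
            simp only [mem_filter, mem_powerset] at hW ⊢
            obtain ⟨hsub, hcard, hcnt⟩ := hW
            have huW : u ∉ W := fun h => huB (hsub h)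
            have hWj : (insert u W) ∩ C j = {u} := by
              ext v
              simp only [mem_inter, mem_insert, mem_singleton]
              constructor
              · rintro ⟨h1 | h1, h2⟩
                · exact h1
                · exact absurd h2 (hBj v (hsub h1))
              · rintro rfl; exact ⟨Or.inl rfl, hu⟩
            refine ⟨⟨?_, ?_, ?_⟩, hWj⟩
            · intro v hv
              rcases mem_insert.1 hv with rfl | h
              · exact mem_union_left _ hu
              · exact mem_union_right _ (hsub h)
            · intro i hi
              rcases mem_insert.1 hi with rfl | h
              · rw [hWj]; simp
              · have : insert u W ∩ C i = W ∩ C i := by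
                  ext v
                  simp only [mem_inter, mem_insert]
                  constructor
                  · rintro ⟨h0 | h1, h2⟩
                    · exact absurd (h0 ▸ h2) (hdisjI i h u hu)
                    · exact ⟨h1, h2⟩
                  · rintro ⟨h1, h2⟩; exact ⟨Or.inr h1, h2⟩
                rw [this]; exact hcard i h
            · rw [filter_insert]
              by_cases hhu : high u
              · rw [if_pos hhu] at hcnt ⊢
                rw [card_insert_of_notMem (fun h => huW (mem_filter.1 h).1)]
                omega
              · rw [if_neg hhu] at hcnt ⊢
                exact hcnt
          · intro W hW
            simp only [mem_filter, mem_powerset] at hW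
            obtain ⟨-, hWj⟩ := hW
            have huW : u ∈ W := (mem_inter.1 (hWj.symm ▸ mem_singleton_self u)).1
            exact insert_erase huW
          · intro W hW
            simp only [mem_filter, mem_powerset] at hW
            have huW : u ∉ W := fun h => huB (hW.1 h)
            exact erase_insert huW
          · intro W hW
            simp only [mem_filter, mem_powerset] at hW
            obtain ⟨⟨hsub, hcard, hcnt⟩, hWj⟩ := hW
            have huW : u ∈ W := (mem_inter.1 (hWj.symm ▸ mem_singleton_self u)).1
            have h1 : ∏ v ∈ W, p v = p u * ∏ v ∈ W.erase u, p v :=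
              (mul_prod_erase W p huW).symm
            have h2 : (insert j I).filter (fun i => W ∩ C i = ∅)
                = I.filter (fun i => (W.erase u) ∩ C i = ∅) := by
              rw [filter_insert, if_neg (by rw [hWj]; simp)]
              refine filter_congr fun i hi => ?_
              have : W ∩ C i = (W.erase u) ∩ C i := by
                ext v
                simp only [mem_inter, mem_erase]
                constructor
                · rintro ⟨h3, h4⟩
                  exact ⟨⟨fun h => (hdisjI i hi u hu) (h ▸ h4), h3⟩, h4⟩
                · rintro ⟨⟨-, h3⟩, h4⟩; exact ⟨h3, h4⟩
              rw [this]
            rw [h1, h2]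
            ring
      rw [hstep]
      have h2 : (∑ u ∈ C j, p u * (∑ W ∈ (I.biUnion C).powerset.filter (fun W =>
              (∀ i ∈ I, (W ∩ C i).card ≤ 1) ∧
                (W.filter high).card < (if high u then k - 1 else k)),
            (∏ u ∈ W, p u) * ∏ i ∈ I.filter (fun i => W ∩ C i = ∅), c i))
          = q j * (∑ S ∈ I.powerset.filter (fun S => S.card < k - 1),
                (∏ i ∈ S, q i) * ∏ i ∈ I \ S, (1 - q i))
            + (∑ u ∈ (C j).filter (fun u => ¬ high u), p u) *
              (∑ S ∈ I.powerset.filter (fun S => S.card < k),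
                (∏ i ∈ S, q i) * ∏ i ∈ I \ S, (1 - q i)) := by
        rw [← sum_filter_add_sum_filter_not (C j) high]
        congr 1
        · rw [sum_mul]
          refine sum_congr rfl fun u hu => ?_
          rw [if_pos (mem_filter.1 hu).2, ih (k - 1)]
        · rw [sum_mul]
          refine sum_congr rfl fun u hu => ?_
          rw [if_neg (mem_filter.1 hu).2, ih k]
      rw [h2, ih k]
      have h3 : (∑ S ∈ (insert j I).powerset.filter (fun S => S.card < k),
            (∏ i ∈ S, q i) * ∏ i ∈ (insert j I) \ S, (1 - q i))
          = (1 - q j) * (∑ S ∈ I.powerset.filter (fun S => S.card < k),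
              (∏ i ∈ S, q i) * ∏ i ∈ I \ S, (1 - q i))
            + q j * (∑ S ∈ I.powerset.filter (fun S => S.card < k - 1),
              (∏ i ∈ S, q i) * ∏ i ∈ I \ S, (1 - q i)) := by
        rw [sum_filter, sum_powerset_insert hjI, sum_filter, sum_filter, mul_sum, mul_sum]
        congr 1
        · refine sum_congr rfl fun S hS => ?_
          have hjS : j ∉ S := fun h => hjI (mem_powerset.1 hS h)
          have hsd : (insert j I) \ S = insert j (I \ S) := by
            ext a
            simp only [mem_sdiff, mem_insert]
            constructor
            · rintro ⟨rfl | h1, h2⟩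
              · exact Or.inl rfl
              · exact Or.inr ⟨h1, h2⟩
            · rintro (rfl | ⟨h1, h2⟩)
              · exact ⟨Or.inl rfl, hjS⟩
              · exact ⟨Or.inr h1, h2⟩
          rw [hsd, prod_insert (by simp [hjI])]
          split_ifs with h
          · ring
          · simp
        · refine sum_congr rfl fun S hS => ?_
          have hjS : j ∉ S := fun h => hjI (mem_powerset.1 hS h)
          have hcd : (insert j S).card = S.card + 1 := card_insert_of_notMem hjS
          have hsd : (insert j I) \ (insert j S) = I \ S := by
            ext a
            simp only [mem_sdiff, mem_insert, not_or]
            constructor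
            · rintro ⟨rfl | h1, h2, h3⟩
              · exact absurd rfl h2
              · exact ⟨h1, h3⟩
            · rintro ⟨h1, h2⟩
              exact ⟨Or.inr h1, fun h => hjI (h ▸ h1), h2⟩
          rw [hcd, hsd, prod_insert hjS]
          by_cases h : S.card + 1 < k
          · rw [if_pos h, if_pos (by omega : S.card < k - 1)]
            ring
          · rw [if_neg h, if_neg (by omega : ¬ S.card < k - 1)]
            simp
      rw [h3]
      have hsplit : ∑ u ∈ C j, p u
          = q j + ∑ u ∈ (C j).filter (fun u => ¬ high u), p u :=
        (sum_filter_add_sum_filter_not (C j) high p).symm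
      simp only [hc]
      rw [hsplit]
      ring

theorem globalTopk_induced_event_relation {α : Type*} [DecidableEq α] (m k : ℕ)
    (C : Fin m → Finset α) (p s : α → ℝ) (R : Finset α)
    (hR : R = Finset.univ.biUnion C)
    (hdisj : ∀ i j, i ≠ j → Disjoint (C i) (C j))
    (hp : ∀ u ∈ R, p u ∈ Set.Ioc (0 : ℝ) 1)
    (hsum : ∀ i, ∑ u ∈ C i, p u ≤ 1)
    (hs : Set.InjOn s R)
    (t : α) (i0 : Fin m) (ht : t ∈ C i0)
    (q : Fin m → ℝ)
    (hq : ∀ i, q i = ∑ u ∈ (C i).filter (fun u => s t < s u), p u)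
    (E : Finset (Fin m))
    (hE : E = insert i0 (Finset.univ.filter (fun i => i ≠ i0 ∧ 0 < q i)))
    (pE : Fin m → ℝ)
    (hpE : ∀ i, pE i = if i = i0 then p t else q i) :
    (∑ W ∈ R.powerset.filter (fun W =>
        (∀ i, (W ∩ C i).card ≤ 1) ∧ t ∈ W ∧ (W.filter (fun u => s t < s u)).card < k),
      (∏ u ∈ W, p u) *
        ∏ i ∈ Finset.univ.filter (fun i => W ∩ C i = ∅), (1 - ∑ u ∈ C i, p u))
    = ∑ We ∈ E.powerset.filter (fun We => i0 ∈ We ∧ (We.erase i0).card < k),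
        (∏ i ∈ We, pE i) * ∏ i ∈ E \ We, (1 - pE i) := by
  have htR : t ∈ R := hR ▸ mem_biUnion.2 ⟨i0, mem_univ _, ht⟩
  set I : Finset (Fin m) := Finset.univ.erase i0 with hI
  have htCi : ∀ i : Fin m, i ≠ i0 → t ∉ C i := fun i h hti =>
    Finset.disjoint_left.1 (hdisj i0 i (Ne.symm h)) ht hti
  have hIB : ∀ v ∈ I.biUnion C, v ∉ C i0 := by
    intro v hv hvi0
    obtain ⟨i, hi, hvi⟩ := mem_biUnion.1 hv
    exact Finset.disjoint_left.1 (hdisj i0 i (Ne.symm (mem_erase.1 hi).1)) hvi0 hvi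
  have hIBR : I.biUnion C ⊆ R := by
    intro v hv
    obtain ⟨i, _, hvi⟩ := mem_biUnion.1 hv
    exact hR ▸ mem_biUnion.2 ⟨i, mem_univ _, hvi⟩
  have htIB : t ∉ I.biUnion C := fun h => hIB t h ht
  -- Step L : factor out t from the LHS
  have hL : (∑ W ∈ R.powerset.filter (fun W =>
        (∀ i, (W ∩ C i).card ≤ 1) ∧ t ∈ W ∧ (W.filter (fun u => s t < s u)).card < k),
      (∏ u ∈ W, p u) *
        ∏ i ∈ Finset.univ.filter (fun i => W ∩ C i = ∅), (1 - ∑ u ∈ C i, p u))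
      = p t * ∑ W ∈ (I.biUnion C).powerset.filter (fun W =>
          (∀ i ∈ I, (W ∩ C i).card ≤ 1) ∧
            (W.filter (fun u => s t < s u)).card < k),
        (∏ u ∈ W, p u) * ∏ i ∈ I.filter (fun i => W ∩ C i = ∅), (1 - ∑ u ∈ C i, p u) := by
    rw [mul_sum]
    refine Finset.sum_nbij' (fun W => W.erase t) (fun W => insert t W) ?_ ?_ ?_ ?_ ?_
    · intro W hW
      simp only [mem_filter, mem_powerset] at hW ⊢
      obtain ⟨hsub, hall, htW, hcnt⟩ := hW
      refine ⟨?_, fun i _ => le_trans (card_le_card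
        (inter_subset_inter (erase_subset t W) (Finset.Subset.refl _))) (hall i), ?_⟩
      · intro v hv
        obtain ⟨hvt, hvW⟩ := mem_erase.1 hv
        obtain ⟨i, -, hvi⟩ := mem_biUnion.1 (hR ▸ hsub hvW)
        rcases eq_or_ne i i0 with rfl | hii0
        · exact absurd (card_le_one.1 (hall i) v (mem_inter.2 ⟨hvW, hvi⟩) t
            (mem_inter.2 ⟨htW, ht⟩)) hvt
        · exact mem_biUnion.2 ⟨i, mem_erase.2 ⟨hii0, mem_univ _⟩, hvi⟩
      · have heq : (W.erase t).filter (fun u => s t < s u)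
            = W.filter (fun u => s t < s u) := by
          rw [filter_erase]
          exact erase_eq_of_notMem
            (fun h : t ∈ W.filter (fun u => s t < s u) =>
              lt_irrefl (s t) (mem_filter.1 h).2)
        rw [heq]
        exact hcnt
    · intro W hW
      simp only [mem_filter, mem_powerset] at hW ⊢
      obtain ⟨hsub, hall, hcnt⟩ := hW
      refine ⟨insert_subset htR (hsub.trans hIBR), ?_, mem_insert_self t W, ?_⟩
      · intro i
        rcases eq_or_ne i i0 with rfl | hii0
        · have : insert t W ∩ C i = {t} := by
            ext v
            simp only [mem_inter, mem_insert, mem_singleton]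
            constructor
            · rintro ⟨h1 | h1, h2⟩
              · exact h1
              · exact absurd h2 (hIB v (hsub h1))
            · rintro rfl; exact ⟨Or.inl rfl, ht⟩
          rw [this, card_singleton]
        · have : insert t W ∩ C i = W ∩ C i := by
            ext v
            simp only [mem_inter, mem_insert]
            constructor
            · rintro ⟨h1 | h1, h2⟩
              · exact absurd (h1 ▸ h2) (htCi i hii0)
              · exact ⟨h1, h2⟩
            · rintro ⟨h1, h2⟩; exact ⟨Or.inr h1, h2⟩
          rw [this]
          exact hall i (mem_erase.2 ⟨hii0, mem_univ _⟩)
      · rw [filter_insert, if_neg (lt_irrefl (s t))]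
        exact hcnt
    · intro W hW
      simp only [mem_filter, mem_powerset] at hW
      exact insert_erase hW.2.2.1
    · intro W hW
      simp only [mem_filter, mem_powerset] at hW
      exact erase_insert (fun h => htIB (hW.1 h))
    · intro W hW
      simp only [mem_filter, mem_powerset] at hW
      obtain ⟨hsub, hall, htW, hcnt⟩ := hW
      have h1 : ∏ u ∈ W, p u = p t * ∏ u ∈ W.erase t, p u :=
        (mul_prod_erase W p htW).symm
      have h2 : Finset.univ.filter (fun i => W ∩ C i = ∅)
          = I.filter (fun i => (W.erase t) ∩ C i = ∅) := by
        ext i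
        simp only [mem_filter, mem_univ, true_and, hI, mem_erase]
        constructor
        · intro h
          have hii0 : i ≠ i0 := by
            rintro rfl
            exact absurd (h ▸ mem_inter.2 ⟨htW, ht⟩) (notMem_empty t)
          refine ⟨⟨hii0, trivial⟩, ?_⟩
          rw [eq_empty_iff_forall_notMem]
          intro v hv
          exact (eq_empty_iff_forall_notMem.1 h) v
            (mem_inter.2 ⟨(mem_erase.1 (mem_inter.1 hv).1).2, (mem_inter.1 hv).2⟩)
        · rintro ⟨⟨hii0, -⟩, h⟩
          rw [eq_empty_iff_forall_notMem]
          intro v hv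
          obtain ⟨hvW, hvC⟩ := mem_inter.1 hv
          have hvt : v ≠ t := fun hvt => htCi i hii0 (hvt ▸ hvC)
          exact (eq_empty_iff_forall_notMem.1 h) v
            (mem_inter.2 ⟨mem_erase.2 ⟨hvt, hvW⟩, hvC⟩)
      rw [h1, h2]
      ring
  -- Step R : factor out i0 from the RHS
  have hD : E.erase i0 = Finset.univ.filter (fun i => i ≠ i0 ∧ 0 < q i) := by
    rw [hE, erase_insert (by simp)]
  have hi0E : i0 ∈ E := hE ▸ mem_insert_self _ _
  have hR1 : (∑ We ∈ E.powerset.filter (fun We => i0 ∈ We ∧ (We.erase i0).card < k),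
        (∏ i ∈ We, pE i) * ∏ i ∈ E \ We, (1 - pE i))
      = p t * ∑ S ∈ (E.erase i0).powerset.filter (fun S => S.card < k),
          (∏ i ∈ S, q i) * ∏ i ∈ (E.erase i0) \ S, (1 - q i) := by
    rw [mul_sum]
    refine Finset.sum_nbij' (fun We => We.erase i0) (fun S => insert i0 S) ?_ ?_ ?_ ?_ ?_
    · intro We hWe
      simp only [mem_filter, mem_powerset] at hWe ⊢
      exact ⟨erase_subset_erase i0 hWe.1, hWe.2.2⟩
    · intro S hS
      simp only [mem_filter, mem_powerset] at hS ⊢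
      obtain ⟨hsub, hcd⟩ := hS
      have hi0S : i0 ∉ S := fun h => (mem_erase.1 (hsub h)).1 rfl
      refine ⟨insert_subset hi0E (hsub.trans (erase_subset i0 E)),
        mem_insert_self i0 S, ?_⟩
      rw [erase_insert hi0S]
      exact hcd
    · intro We hWe
      simp only [mem_filter, mem_powerset] at hWe
      exact insert_erase hWe.2.1
    · intro S hS
      simp only [mem_filter, mem_powerset] at hS
      exact erase_insert (fun h => (mem_erase.1 (hS.1 h)).1 rfl)
    · intro We hWe
      simp only [mem_filter, mem_powerset] at hWe
      obtain ⟨hsub, hi0We, -⟩ := hWe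
      have h1 : ∏ i ∈ We, pE i = p t * ∏ i ∈ We.erase i0, q i := by
        rw [← mul_prod_erase We pE hi0We, hpE i0, if_pos rfl]
        congr 1
        exact prod_congr rfl fun i hi => by
          rw [hpE i, if_neg (mem_erase.1 hi).1]
      have h2 : E \ We = (E.erase i0) \ (We.erase i0) := by
        ext a
        simp only [mem_sdiff, mem_erase, not_and]
        constructor
        · rintro ⟨haE, haWe⟩
          have hai0 : a ≠ i0 := by rintro rfl; exact haWe hi0We
          exact ⟨⟨hai0, haE⟩, fun _ h => haWe h⟩
        · rintro ⟨⟨hai0, haE⟩, hn⟩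
          exact ⟨haE, fun h => hn hai0 h⟩
      have h3 : ∏ i ∈ (E.erase i0) \ (We.erase i0), (1 - pE i)
          = ∏ i ∈ (E.erase i0) \ (We.erase i0), (1 - q i) := by
        refine prod_congr rfl fun i hi => ?_
        rw [hpE i, if_neg (mem_erase.1 (mem_sdiff.1 hi).1).1]
      rw [h1, h2, h3]
      ring
  -- Step ext : extend the index set from E.erase i0 to I
  have hq0 : ∀ i : Fin m, i ≠ i0 → i ∉ E.erase i0 → q i = 0 := by
    intro i hii0 hiD
    rw [hD] at hiD
    have hnonneg : 0 ≤ q i := by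
      rw [hq i]
      exact sum_nonneg fun u hu => (hp u (hR ▸ mem_biUnion.2
        ⟨i, mem_univ _, (mem_filter.1 hu).1⟩)).1.le
    rcases lt_or_eq_of_le hnonneg with h | h
    · exact absurd (mem_filter.2 ⟨mem_univ _, hii0, h⟩) hiD
    · exact h.symm
  have hDsub : E.erase i0 ⊆ I := by
    intro i hi
    rw [hD] at hi
    exact mem_erase.2 ⟨(mem_filter.1 hi).2.1, mem_univ _⟩
  have hext : (∑ S ∈ (E.erase i0).powerset.filter (fun S => S.card < k),
        (∏ i ∈ S, q i) * ∏ i ∈ (E.erase i0) \ S, (1 - q i))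
      = ∑ S ∈ I.powerset.filter (fun S => S.card < k),
        (∏ i ∈ S, q i) * ∏ i ∈ I \ S, (1 - q i) := by
    have hfix : ∀ S ∈ (E.erase i0).powerset.filter (fun S => S.card < k),
        (∏ i ∈ S, q i) * ∏ i ∈ (E.erase i0) \ S, (1 - q i)
        = (∏ i ∈ S, q i) * ∏ i ∈ I \ S, (1 - q i) := by
      intro S hS
      congr 1
      refine prod_subset (sdiff_subset_sdiff hDsub (Finset.Subset.refl _)) ?_
      intro i hi hiD
      have hii0 : i ≠ i0 := (mem_erase.1 (mem_sdiff.1 hi).1).1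
      have : q i = 0 := hq0 i hii0 (fun h => hiD (mem_sdiff.2 ⟨h, (mem_sdiff.1 hi).2⟩))
      rw [this, sub_zero]
    rw [sum_congr rfl hfix]
    refine sum_subset (filter_subset_filter _ (powerset_mono.2 hDsub)) ?_
    · intro S hSI hSD
      simp only [mem_filter, mem_powerset] at hSI hSD
      have : ¬ S ⊆ E.erase i0 := fun h => hSD ⟨h, hSI.2⟩
      obtain ⟨i, hiS, hiD⟩ := not_subset.1 this
      have hii0 : i ≠ i0 := (mem_erase.1 (hSI.1 hiS)).1
      rw [prod_eq_zero hiS (hq0 i hii0 hiD), zero_mul]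
  -- Put everything together
  have hkey : (∑ W ∈ (I.biUnion C).powerset.filter (fun W =>
        (∀ i ∈ I, (W ∩ C i).card ≤ 1) ∧
          (W.filter (fun u => s t < s u)).card < k),
      (∏ u ∈ W, p u) * ∏ i ∈ I.filter (fun i => W ∩ C i = ∅), (1 - ∑ u ∈ C i, p u))
      = ∑ S ∈ I.powerset.filter (fun S => S.card < k),
          (∏ i ∈ S, q i) * ∏ i ∈ I \ S, (1 - q i) := by
    have h := keyFG C p (fun u => s t < s u) hdisj I k
    simp only [← hq] at h
    exact h
  rw [hL, hkey, hR1, hext]
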